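/- arXiv:2509.16034 — 3 statements merged into one kernel-verified Lean document; each statement's English description precedes it below -/
import Mathlib

section
/- For every positive integer n, the reduced factor complexity of the Thue–Morse sequence satisfies: ρ_t^red(n) = ρ_t^red((n+1)/2) if n is odd, and ρ_t^red(n) = ρ_t^red(m+1) + 2 if n = 4m or n = 4m+2 for a nonnegative integer m (with n positive). -/
/-- The reduction of a word: replace each maximal run of identical characters
by a single character. -/
def red {α : Type*} [DecidableEq α] (w : List α) : List α :=
  w.destutter (· ≠ ·)

/-- The length-`k` factor of the infinite sequence `x` (1-indexed) starting at
position `i`. -/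
def factorAt {α : Type*} (x : ℕ → α) (i k : ℕ) : List α :=
  (List.range k).map (fun j => x (i + j))

/-- The reduced factor complexity: the number of length-`n` factors of `x`,
counted up to reduced-equivalence (`red v = red w`). -/
noncomputable def redFactorComplexity {α : Type*} [DecidableEq α]
    (x : ℕ → α) (n : ℕ) : ℕ :=
  Set.ncard { u : List α | ∃ i ≥ 1, u = red (factorAt x i n) }

/-- The Thue–Morse sequence (1-indexed): `t n` is the parity of the number of
1's in the binary expansion of `n - 1`. -/
def thueMorse (n : ℕ) : Bool :=
  decide ((Nat.digits 2 (n - 1)).sum % 2 = 1)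

/-- The number of alternations (occurrences of 01 or 10) in a binary word. -/
def alt (w : List Bool) : ℕ :=
  (List.zipWith (fun a b => a != b) w w.tail).count true

/-- The minimum number of alternations among length-`k` factors of Thue–Morse. -/
noncomputable def tmAltMin (k : ℕ) : ℕ :=
  sInf { a : ℕ | ∃ i ≥ 1, a = alt (factorAt thueMorse i k) }

/-- The maximum number of alternations among length-`k` factors of Thue–Morse. -/
noncomputable def tmAltMax (k : ℕ) : ℕ :=
  sSup { a : ℕ | ∃ i ≥ 1, a = alt (factorAt thueMorse i k) }

/-- The Thue–Morse morphism `0 → 01`, `1 → 10`. -/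
def mu (w : List Bool) : List Bool :=
  w.flatMap (fun b => if b then [true, false] else [false, true])

/-- The regular paperfolding sequence (1-indexed): writing `n = n' * 2^k` with
`n'` odd, `f n = 1` iff `n' ≡ 3 (mod 4)`. -/
def paperfold (n : ℕ) : Bool :=
  decide ((n / 2 ^ (n.factorization 2)) % 4 = 3)

/-- The reduced abelian complexity: the number of length-`n` factors of `x`,
counted up to the equivalence identifying `v` and `w` whenever `red v` is a
rearrangement of the characters of `red w`. -/
noncomputable def redAbelianComplexity {α : Type*} [DecidableEq α]
    (x : ℕ → α) (n : ℕ) : ℕ :=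
  Set.ncard { m : Multiset α | ∃ i ≥ 1, m = ↑(red (factorAt x i n)) }


def sb (k : ℕ) : Bool := decide ((Nat.digits 2 k).sum % 2 = 1)

lemma sb_two_mul (k : ℕ) : sb (2 * k) = sb k := by
  rcases Nat.eq_zero_or_pos k with h | h
  · simp [h]
  · unfold sb
    rw [Nat.digits_def' (by norm_num) (by omega)]
    simp [Nat.mul_div_cancel_left _ (by norm_num : 0 < 2), Nat.mul_mod_right]

lemma sb_two_mul_add_one (k : ℕ) : sb (2 * k + 1) = ! sb k := by
  unfold sb
  rw [Nat.digits_def' (by norm_num) (by omega)]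
  have h1 : (2 * k + 1) % 2 = 1 := by omega
  have h2 : (2 * k + 1) / 2 = k := by omega
  rw [h1, h2]
  simp only [List.sum_cons]
  rcases Nat.mod_two_eq_zero_or_one ((Nat.digits 2 k).sum) with h | h <;>
    simp [Nat.add_mod, h]

lemma sb_pow_add : ∀ K r, r < 2 ^ K → sb (2 ^ K + r) = ! sb r := by
  intro K
  induction K with
  | zero =>
    intro r hr
    interval_cases r
    · simp [sb]
  | succ K ih =>
    intro r hr
    have h2 : (2 ^ (K + 1) + r) / 2 = 2 ^ K + r / 2 := by
      rcases Nat.even_or_odd r with ⟨s, hs⟩ | ⟨s, hs⟩ <;> · subst hs; ring_nf; omega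
    have h3 : (2 ^ (K + 1) + r) % 2 = r % 2 := by
      have : 2 ^ (K + 1) % 2 = 0 := by
        simp [pow_succ, Nat.mul_mod_left]
      omega
    have hrec : r / 2 < 2 ^ K := by
      have := Nat.pow_lt_pow_succ (by norm_num : 1 < 2) (n := K)
      omega
    rcases Nat.even_or_odd r with ⟨s, hs⟩ | ⟨s, hs⟩
    · subst hs
      have hs2 : s + s = 2 * s := by ring
      rw [hs2] at *
      have : 2 ^ (K + 1) + 2 * s = 2 * (2 ^ K + s) := by ring
      rw [this, sb_two_mul, sb_two_mul, ih s (by omega)]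
    · subst hs
      have : 2 ^ (K + 1) + (2 * s + 1) = 2 * (2 ^ K + s) + 1 := by ring
      rw [this, sb_two_mul_add_one, sb_two_mul_add_one, ih s (by omega)]

lemma tm_eq_sb (n : ℕ) : thueMorse n = sb (n - 1) := rfl

lemma tm_odd (m : ℕ) : thueMorse (2 * m + 1) = thueMorse (m + 1) := by
  rw [tm_eq_sb, tm_eq_sb]
  have h1 : 2 * m + 1 - 1 = 2 * m := by omega
  have h2 : m + 1 - 1 = m := by omega
  rw [h1, h2, sb_two_mul]

lemma tm_even (m : ℕ) : thueMorse (2 * m + 2) = ! thueMorse (m + 1) := by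
  rw [tm_eq_sb, tm_eq_sb]
  have h1 : 2 * m + 2 - 1 = 2 * m + 1 := by omega
  have h2 : m + 1 - 1 = m := by omega
  rw [h1, h2, sb_two_mul_add_one]

lemma tm_compl (K q : ℕ) (h1 : 1 ≤ q) (h2 : q ≤ 2 ^ K) :
    thueMorse (2 ^ K + q) = ! thueMorse q := by
  rw [tm_eq_sb, tm_eq_sb]
  have h3 : 2 ^ K + q - 1 = 2 ^ K + (q - 1) := by omega
  rw [h3, sb_pow_add K (q - 1) (by omega)]

def g (i : ℕ) : Bool := thueMorse i != thueMorse (i + 1)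

lemma g_odd (m : ℕ) : g (2 * m + 1) = true := by
  unfold g
  rw [tm_odd, show 2 * m + 1 + 1 = 2 * m + 2 by ring, tm_even]
  cases thueMorse (m + 1) <;> rfl

lemma g_even (m : ℕ) : g (2 * m + 2) = ! g (m + 1) := by
  unfold g
  rw [tm_even, show 2 * m + 2 + 1 = 2 * (m + 1) + 1 by ring, tm_odd]
  cases thueMorse (m + 1) <;> cases thueMorse (m + 2) <;> rfl

lemma g_compl (K q : ℕ) (h1 : 1 ≤ q) (h2 : q + 1 ≤ 2 ^ K) : g (2 ^ K + q) = g q := by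
  unfold g
  rw [tm_compl K q h1 (by omega), show 2 ^ K + q + 1 = 2 ^ K + (q + 1) by ring,
    tm_compl K (q + 1) (by omega) h2]
  cases thueMorse q <;> cases thueMorse (q + 1) <;> rfl

def F (i L : ℕ) : ℕ := ∑ j ∈ Finset.range L, (if g (i + j) then 1 else 0)

lemma F_le (i L : ℕ) : F i L ≤ L := by
  calc F i L ≤ ∑ j ∈ Finset.range L, 1 := Finset.sum_le_sum (by intro j _; split <;> omega)
  _ = L := by simp

lemma F_step (i L : ℕ) : F i (L + 1) = F i L + (if g (i + L) then 1 else 0) := by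
  unfold F; rw [Finset.sum_range_succ]

lemma F_step' (i L : ℕ) : F i (L + 1) = (if g i then 1 else 0) + F (i + 1) L := by
  unfold F
  rw [Finset.sum_range_succ']
  simp only [Nat.add_zero]
  rw [add_comm]
  congr 1
  apply Finset.sum_congr rfl
  intro j _
  rw [show i + (j + 1) = i + 1 + j from by omega]

lemma F_shift (i L : ℕ) :
    F (i + 1) L + (if g i then 1 else 0) = F i L + (if g (i + L) then 1 else 0) := by
  have h1 := F_step i L
  have h2 := F_step' i L
  cases hg : g i <;> cases hg2 : g (i + L) <;>
    simp only [hg, hg2, if_true, if_false] at h1 h2 ⊢ <;> omega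

lemma FA (m l : ℕ) : F (2 * m + 1) (2 * l) + F (m + 1) l = 2 * l := by
  induction l with
  | zero => simp [F]
  | succ l ih =>
    have e1 : 2 * (l + 1) = 2 * l + 1 + 1 := by ring
    rw [e1, F_step, F_step, F_step]
    have g1 : g (2 * m + 1 + 2 * l) = true := by
      rw [show 2 * m + 1 + 2 * l = 2 * (m + l) + 1 by ring, g_odd]
    have g2 : g (2 * m + 1 + (2 * l + 1)) = ! g (m + 1 + l) := by
      rw [show 2 * m + 1 + (2 * l + 1) = 2 * (m + l) + 2 by ring, g_even,
        show m + l + 1 = m + 1 + l by ring]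
    rw [g1, g2]
    cases g (m + 1 + l) <;> simp <;> omega

lemma FB (m l : ℕ) : F (2 * m + 2) (2 * l) + F (m + 1) l = 2 * l := by
  induction l with
  | zero => simp [F]
  | succ l ih =>
    have e1 : 2 * (l + 1) = 2 * l + 1 + 1 := by ring
    rw [e1, F_step, F_step, F_step]
    have g1 : g (2 * m + 2 + 2 * l) = ! g (m + 1 + l) := by
      rw [show 2 * m + 2 + 2 * l = 2 * (m + l) + 2 by ring, g_even,
        show m + l + 1 = m + 1 + l by ring]
    have g2 : g (2 * m + 2 + (2 * l + 1)) = true := by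
      rw [show 2 * m + 2 + (2 * l + 1) = 2 * (m + l + 1) + 1 by ring, g_odd]
    rw [g1, g2]
    cases g (m + 1 + l) <;> simp <;> omega

lemma FC (m l : ℕ) : F (2 * m + 1) (2 * l + 1) + F (m + 1) l = 2 * l + 1 := by
  rw [F_step]
  have g1 : g (2 * m + 1 + 2 * l) = true := by
    rw [show 2 * m + 1 + 2 * l = 2 * (m + l) + 1 by ring, g_odd]
  rw [g1]
  have := FA m l
  simp only [if_pos trivial]
  omega

lemma FD (m l : ℕ) : F (2 * m + 2) (2 * l + 1) + F (m + 1) (l + 1) = 2 * l + 1 := by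
  rw [F_step, F_step]
  have g1 : g (2 * m + 2 + 2 * l) = ! g (m + 1 + l) := by
    rw [show 2 * m + 2 + 2 * l = 2 * (m + l) + 2 by ring, g_even,
      show m + l + 1 = m + 1 + l by ring]
  rw [g1]
  have := FB m l
  have := FB m l
  cases hg : g (m + 1 + l) <;>
    simp only [hg, Bool.not_true, Bool.not_false] at this ⊢ <;>
    simp only [if_pos trivial, if_pos rfl, if_neg (by simp : ¬ (false = true))] <;> omega

def S (L : ℕ) : Set ℕ := { a : ℕ | ∃ i ≥ 1, a = F i L }

lemma S_nonempty (L : ℕ) : (S L).Nonempty := ⟨F 1 L, 1, le_refl 1, rfl⟩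

lemma S_bdd (L : ℕ) : ∀ a ∈ S L, a ≤ L := by
  rintro a ⟨i, hi, rfl⟩; exact F_le i L

lemma S_bddAbove (L : ℕ) : BddAbove (S L) := ⟨L, S_bdd L⟩

noncomputable def p (L : ℕ) : ℕ := sInf (S L)
noncomputable def q (L : ℕ) : ℕ := sSup (S L)

lemma p_mem (L : ℕ) : p L ∈ S L := Nat.sInf_mem (S_nonempty L)
lemma q_mem (L : ℕ) : q L ∈ S L := Nat.sSup_mem (S_nonempty L) (S_bddAbove L)
lemma p_le (L : ℕ) {a : ℕ} (h : a ∈ S L) : p L ≤ a := Nat.sInf_le h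
lemma le_q (L : ℕ) {a : ℕ} (h : a ∈ S L) : a ≤ q L := le_csSup (S_bddAbove L) h
lemma p_le_q (L : ℕ) : p L ≤ q L := p_le L (q_mem L)
lemma q_le_L (L : ℕ) : q L ≤ L := S_bdd L _ (q_mem L)

lemma q_mono (L : ℕ) : q L ≤ q (L + 1) := by
  obtain ⟨i, hi, he⟩ := q_mem L
  have h1 : F i (L + 1) ∈ S (L + 1) := ⟨i, hi, rfl⟩
  have := le_q (L + 1) h1
  rw [F_step] at this
  split at this <;> omega

lemma p_mono (L : ℕ) : p L ≤ p (L + 1) := by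
  obtain ⟨i, hi, he⟩ := p_mem (L + 1)
  have h1 : F i L ∈ S L := ⟨i, hi, rfl⟩
  have := p_le L h1
  rw [F_step] at he
  split at he <;> omega

/-- Discrete intermediate value theorem. -/
lemma ivt (f : ℕ → ℕ) (hf : ∀ i, f (i + 1) ≤ f i + 1 ∧ f i ≤ f (i + 1) + 1) :
    ∀ d i c, (f i ≤ c ∧ c ≤ f (i + d)) ∨ (f (i + d) ≤ c ∧ c ≤ f i) →
    ∃ k, i ≤ k ∧ k ≤ i + d ∧ f k = c := by
  intro d
  induction d with
  | zero =>
    intro i c h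
    simp only [Nat.add_zero] at h
    exact ⟨i, le_refl i, by omega, by omega⟩
  | succ d ih =>
    intro i c h
    have hlip := hf i
    rcases h with ⟨h1, h2⟩ | ⟨h1, h2⟩
    · by_cases hc : f (i + 1) ≤ c
      · obtain ⟨k, hk1, hk2, hk3⟩ := ih (i + 1) c (Or.inl ⟨hc, by
          rw [show i + 1 + d = i + (d + 1) from by omega]; exact h2⟩)
        exact ⟨k, by omega, by omega, hk3⟩
      · exact ⟨i, le_refl i, by omega, by omega⟩
    · by_cases hc : c ≤ f (i + 1)
      · obtain ⟨k, hk1, hk2, hk3⟩ := ih (i + 1) c (Or.inr ⟨by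
          rw [show i + 1 + d = i + (d + 1) from by omega]; exact h1, hc⟩)
        exact ⟨k, by omega, by omega, hk3⟩
      · exact ⟨i, le_refl i, by omega, by omega⟩

lemma F_lip (L i : ℕ) : F i L ≤ F (i + 1) L + 1 ∧ F (i + 1) L ≤ F i L + 1 := by
  have := F_shift i L
  constructor <;> [skip; skip] <;> · split at this <;> split at this <;> omega

lemma S_interval (L : ℕ) : S L = Set.Icc (p L) (q L) := by
  apply Set.eq_of_subset_of_subset
  · intro a ha; exact ⟨p_le L ha, le_q L ha⟩
  · rintro c ⟨hc1, hc2⟩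
    obtain ⟨i0, hi0, he0⟩ := p_mem L
    obtain ⟨i1, hi1, he1⟩ := q_mem L
    rcases le_total i0 i1 with h | h
    · obtain ⟨k, hk1, _, hk3⟩ := ivt (fun i => F i L)
        (fun i => ⟨(F_lip L i).2, (F_lip L i).1⟩) (i1 - i0) i0 c
        (Or.inl ⟨by omega,
          by rw [show i0 + (i1 - i0) = i1 from by omega]; omega⟩)
      exact ⟨k, by omega, hk3.symm⟩
    · obtain ⟨k, hk1, _, hk3⟩ := ivt (fun i => F i L)
        (fun i => ⟨(F_lip L i).2, (F_lip L i).1⟩) (i0 - i1) i1 c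
        (Or.inr ⟨by rw [show i1 + (i0 - i1) = i0 from by omega]; omega,
          by omega⟩)
      exact ⟨k, by omega, hk3.symm⟩

lemma S_ncard (L : ℕ) : (S L).ncard = q L + 1 - p L := by
  rw [S_interval, ← Finset.coe_Icc, Set.ncard_coe_finset, Nat.card_Icc]

lemma index_split (i : ℕ) (hi : 1 ≤ i) :
    (∃ m, i = 2 * m + 1) ∨ (∃ m, i = 2 * m + 2) := by
  rcases Nat.even_or_odd i with ⟨s, hs⟩ | ⟨s, hs⟩
  · exact Or.inr ⟨s - 1, by omega⟩
  · exact Or.inl ⟨s, by omega⟩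

lemma S_even (l a : ℕ) : a ∈ S (2 * l) ↔ ∃ b ∈ S l, a + b = 2 * l := by
  constructor
  · rintro ⟨i, hi, rfl⟩
    rcases index_split i hi with ⟨m, rfl⟩ | ⟨m, rfl⟩
    · exact ⟨F (m + 1) l, ⟨m + 1, by omega, rfl⟩, FA m l⟩
    · exact ⟨F (m + 1) l, ⟨m + 1, by omega, rfl⟩, FB m l⟩
  · rintro ⟨b, ⟨j, hj, rfl⟩, hab⟩
    obtain ⟨m, rfl⟩ : ∃ m, j = m + 1 := ⟨j - 1, by omega⟩
    exact ⟨2 * m + 1, by omega, by have := FA m l; omega⟩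

lemma S_odd (l a : ℕ) :
    a ∈ S (2 * l + 1) ↔ (∃ b ∈ S l, a + b = 2 * l + 1) ∨ (∃ b ∈ S (l + 1), a + b = 2 * l + 1) := by
  constructor
  · rintro ⟨i, hi, rfl⟩
    rcases index_split i hi with ⟨m, rfl⟩ | ⟨m, rfl⟩
    · exact Or.inl ⟨F (m + 1) l, ⟨m + 1, by omega, rfl⟩, FC m l⟩
    · exact Or.inr ⟨F (m + 1) (l + 1), ⟨m + 1, by omega, rfl⟩, FD m l⟩
  · rintro (⟨b, ⟨j, hj, rfl⟩, hab⟩ | ⟨b, ⟨j, hj, rfl⟩, hab⟩)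
    · obtain ⟨m, rfl⟩ : ∃ m, j = m + 1 := ⟨j - 1, by omega⟩
      exact ⟨2 * m + 1, by omega, by have := FC m l; omega⟩
    · obtain ⟨m, rfl⟩ : ∃ m, j = m + 1 := ⟨j - 1, by omega⟩
      exact ⟨2 * m + 2, by omega, by have := FD m l; omega⟩

lemma q_even (l : ℕ) : q (2 * l) = 2 * l - p l := by
  apply le_antisymm
  · obtain ⟨b, hb, hab⟩ := (S_even l _).1 (q_mem (2 * l))
    have := p_le l hb
    omega
  · have h1 : 2 * l - p l ∈ S (2 * l) := (S_even l _).2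
      ⟨p l, p_mem l, by have := S_bdd l _ (p_mem l); omega⟩
    exact le_q _ h1

lemma p_even (l : ℕ) : p (2 * l) = 2 * l - q l := by
  apply le_antisymm
  · have h1 : 2 * l - q l ∈ S (2 * l) := (S_even l _).2
      ⟨q l, q_mem l, by have := q_le_L l; omega⟩
    exact p_le _ h1
  · obtain ⟨b, hb, hab⟩ := (S_even l _).1 (p_mem (2 * l))
    have := le_q l hb
    have := q_le_L l
    omega

lemma q_odd (l : ℕ) : q (2 * l + 1) = 2 * l + 1 - p l := by
  apply le_antisymm
  · rcases (S_odd l _).1 (q_mem (2 * l + 1)) with ⟨b, hb, hab⟩ | ⟨b, hb, hab⟩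
    · have := p_le l hb
      omega
    · have h1 := p_le (l + 1) hb
      have h2 := p_mono l
      omega
  · have h1 : 2 * l + 1 - p l ∈ S (2 * l + 1) := (S_odd l _).2
      (Or.inl ⟨p l, p_mem l, by have := S_bdd l _ (p_mem l); omega⟩)
    exact le_q _ h1

lemma p_odd (l : ℕ) : p (2 * l + 1) = 2 * l + 1 - q (l + 1) := by
  apply le_antisymm
  · have h1 : 2 * l + 1 - q (l + 1) ∈ S (2 * l + 1) := (S_odd l _).2
      (Or.inr ⟨q (l + 1), q_mem (l + 1), by have := q_le_L (l + 1); omega⟩)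
    exact p_le _ h1
  · rcases (S_odd l _).1 (p_mem (2 * l + 1)) with ⟨b, hb, hab⟩ | ⟨b, hb, hab⟩
    · have h1 := le_q l hb
      have h2 := q_mono l
      have := q_le_L (l + 1)
      omega
    · have := le_q (l + 1) hb
      have := q_le_L (l + 1)
      omega


def altword : Bool → ℕ → List Bool
  | _, 0 => []
  | b, (L + 1) => b :: altword (!b) L

lemma altword_length (b : Bool) (L : ℕ) : (altword b L).length = L := by
  induction L generalizing b with
  | zero => rfl
  | succ L ih => simp [altword, ih]

lemma altword_inj (b b' : Bool) (L L' : ℕ)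
    (h : altword b (L + 1) = altword b' (L' + 1)) : b = b' ∧ L = L' := by
  have hl : L + 1 = L' + 1 := by
    rw [← altword_length b (L + 1), ← altword_length b' (L' + 1), h]
  simp only [altword, List.cons.injEq] at h
  exact ⟨h.1, by omega⟩

lemma factorAt_succ {α : Type*} (x : ℕ → α) (i n : ℕ) :
    factorAt x i (n + 1) = x i :: factorAt x (i + 1) n := by
  unfold factorAt
  rw [List.range_succ_eq_map]
  simp only [List.map_cons, Nat.add_zero, List.map_map]
  congr 1
  apply List.map_congr_left
  intro j _
  simp [Function.comp]
  congr 1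
  omega

lemma alt_nil : alt [] = 0 := rfl
lemma alt_single (a : Bool) : alt [a] = 0 := rfl

lemma alt_cons_cons (a b : Bool) (l : List Bool) :
    alt (a :: b :: l) = (if a != b then 1 else 0) + alt (b :: l) := by
  unfold alt
  simp only [List.tail_cons, List.zipWith_cons_cons, List.count_cons]
  cases a <;> cases b <;> simp [add_comm]

lemma destutter'_eq_altword (l : List Bool) : ∀ a : Bool,
    List.destutter' (· ≠ ·) a l = altword a (alt (a :: l) + 1) := by
  induction l with
  | nil => intro a; rfl
  | cons b l ih =>
    intro a
    rw [List.destutter', alt_cons_cons]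
    by_cases hab : a = b
    · subst hab
      rw [if_neg (show ¬ a ≠ a from fun h => h rfl),
        if_neg (show ¬ ((a != a) = true) from by simp), ih a, Nat.zero_add]
    · have hb : b = !a := by
        cases a <;> cases b <;> first | rfl | exact absurd rfl hab
      rw [if_pos (show a ≠ b from hab),
        if_pos (show (a != b) = true from by
          cases a <;> cases b <;> first | rfl | exact absurd rfl hab), ih b]
      rw [show 1 + alt (b :: l) + 1 = (alt (b :: l) + 1) + 1 from by ring, altword, hb]
      simp [altword]

lemma red_eq_altword (w : List Bool) (a : Bool) (l : List Bool) (hw : w = a :: l) :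
    red w = altword a (alt w + 1) := by
  subst hw
  rw [red, List.destutter, destutter'_eq_altword]

lemma alt_factor : ∀ n i, alt (factorAt thueMorse i (n + 1)) = F i n := by
  intro n
  induction n with
  | zero => intro i; rw [factorAt_succ]; simp [factorAt, alt_single, F]
  | succ n ih =>
    intro i
    rw [factorAt_succ, factorAt_succ, alt_cons_cons, ← factorAt_succ, ih (i + 1), F_step']
    rfl

lemma red_factor (n i : ℕ) :
    red (factorAt thueMorse i (n + 1)) = altword (thueMorse i) (F i n + 1) := by
  rw [red_eq_altword (factorAt thueMorse i (n + 1)) (thueMorse i)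
    (factorAt thueMorse (i + 1) n) (factorAt_succ _ _ _), alt_factor]

lemma compl_exists (N i : ℕ) (hi : 1 ≤ i) :
    ∃ j, 1 ≤ j ∧ thueMorse j = ! thueMorse i ∧ F j N = F i N := by
  set K := i + N + 1 with hK
  have hp1 : i + N < 2 ^ (i + N) := Nat.lt_two_pow_self
  have hp2 : 2 ^ (i + N) ≤ 2 ^ K := Nat.pow_le_pow_right (by norm_num) (by omega)
  have hpow : i + N + 1 ≤ 2 ^ K := by omega
  refine ⟨2 ^ K + i, by omega, tm_compl K i hi (by omega), ?_⟩
  unfold F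
  apply Finset.sum_congr rfl
  intro jj hjj
  rw [Finset.mem_range] at hjj
  rw [show 2 ^ K + i + jj = 2 ^ K + (i + jj) from by ring,
    g_compl K (i + jj) (by omega) (by omega)]

lemma rfc (N : ℕ) :
    redFactorComplexity thueMorse (N + 1) = 2 * (q N + 1 - p N) := by
  classical
  set f : Bool × ℕ → List Bool := fun z => altword z.1 (z.2 + 1) with hf
  have finj : Function.Injective f := by
    rintro ⟨b, a⟩ ⟨b', a'⟩ h
    obtain ⟨h1, h2⟩ := altword_inj b b' a a' h
    simp [h1, h2]
  have hset : { u : List Bool | ∃ i ≥ 1, u = red (factorAt thueMorse i (N + 1)) }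
      = ↑((Finset.univ ×ˢ Finset.Icc (p N) (q N)).image f) := by
    ext u
    simp only [Set.mem_setOf_eq, Finset.coe_image, Set.mem_image, Finset.mem_coe,
      Finset.mem_product, Finset.mem_univ, true_and, Finset.mem_Icc]
    constructor
    · rintro ⟨i, hi, rfl⟩
      refine ⟨(thueMorse i, F i N), ?_, (red_factor N i).symm⟩
      have hFS : F i N ∈ S N := ⟨i, hi, rfl⟩
      exact ⟨p_le N hFS, le_q N hFS⟩
    · rintro ⟨⟨b, a⟩, ha, rfl⟩
      have haS : a ∈ S N := by rw [S_interval]; exact ha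
      obtain ⟨i, hi, rfl⟩ := haS
      by_cases hb : b = thueMorse i
      · exact ⟨i, hi, by rw [red_factor, hb]⟩
      · have hb' : b = ! thueMorse i := by
          cases hti : thueMorse i <;> rw [hti] at hb <;> cases b <;> simp_all
        obtain ⟨j, hj, hj1, hj2⟩ := compl_exists N i hi
        exact ⟨j, hj, by rw [red_factor, hj1, ← hb', hj2]⟩
  rw [redFactorComplexity, hset, Set.ncard_coe_finset,
    Finset.card_image_of_injective _ finj, Finset.card_product, Finset.card_univ,
    Fintype.card_bool, Nat.card_Icc]


theorem stmt0 (n : ℕ) (hn : 1 ≤ n) :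
    (Odd n →
      redFactorComplexity thueMorse n =
        redFactorComplexity thueMorse ((n + 1) / 2)) ∧
    (∀ m : ℕ, n = 4 * m ∨ n = 4 * m + 2 →
      redFactorComplexity thueMorse n =
        redFactorComplexity thueMorse (m + 1) + 2) := by
  constructor
  · rintro ⟨t, ht⟩
    obtain ⟨k, rfl⟩ : ∃ k, n = 2 * k + 1 := ⟨t, by omega⟩
    have h1 : (2 * k + 1 + 1) / 2 = k + 1 := by omega
    rw [h1, show 2 * k + 1 = (2 * k) + 1 from rfl, rfc, rfc, q_even, p_even]
    have := p_le_q k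
    have := q_le_L k
    omega
  · rintro m (rfl | rfl)
    · -- n = 4 * m, m ≥ 1
      have hm : 1 ≤ m := by omega
      obtain ⟨m', rfl⟩ : ∃ m', m = m' + 1 := ⟨m - 1, by omega⟩
      have e1 : 4 * (m' + 1) = (2 * (2 * m' + 1) + 1) + 1 := by ring
      rw [e1, rfc, rfc, q_odd (2 * m' + 1), p_odd (2 * m' + 1),
        show (2 * m' + 1) + 1 = 2 * (m' + 1) from by ring, q_even (m' + 1), p_odd m']
      have h1 := p_le_q (m' + 1)
      have h2 := q_le_L (m' + 1)
      have h3 := p_le_q (2 * m' + 1)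
      have h4 := q_le_L (2 * m' + 1)
      have h5 := p_le_q (2 * (m' + 1))
      have h6 := q_le_L (2 * (m' + 1))
      omega
    · -- n = 4 * m + 2
      have e1 : 4 * m + 2 = (2 * (2 * m) + 1) + 1 := by ring
      rw [e1, rfc, rfc, q_odd (2 * m), p_odd (2 * m), q_odd m, p_even m]
      have h1 := p_le_q m
      have h2 := q_le_L m
      have h3 := p_le_q (2 * m)
      have h4 := q_le_L (2 * m)
      have h5 := p_le_q (2 * m + 1)
      have h6 := q_le_L (2 * m + 1)
      omega
end

section
/- For every integer n ≥ 1, m_{4n+2} = 2n + m_{n+1}, where m_k (resp. M_k) is the minimum (resp. maximum) number of alternations among length-k factors of the Thue–Morse sequence. -/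
/-! ### Auxiliary machinery -/

private def sdig (p : ℕ) : ℕ := (Nat.digits 2 p).sum % 2

private lemma sdig_lt (p : ℕ) : sdig p < 2 := Nat.mod_lt _ (by norm_num)

private lemma sdig_two_mul (q : ℕ) : sdig (2 * q) = sdig q := by
  rcases Nat.eq_zero_or_pos q with h | h
  · simp [h]
  · unfold sdig
    rw [Nat.digits_def' (by norm_num : 1 < 2) (by omega : 0 < 2 * q)]
    simp [Nat.mul_div_cancel_left q (by norm_num : 0 < 2)]

private lemma sdig_two_mul_add_one (q : ℕ) : sdig (2 * q + 1) = (sdig q + 1) % 2 := by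
  unfold sdig
  rw [Nat.digits_def' (by norm_num : 1 < 2) (by omega : 0 < 2 * q + 1)]
  have h1 : (2 * q + 1) % 2 = 1 := by omega
  have h2 : (2 * q + 1) / 2 = q := by omega
  rw [h1, h2]
  simp
  omega

private lemma v2_odd (q : ℕ) : (2*q+1).factorization 2 = 0 :=
  Nat.factorization_eq_zero_of_not_dvd (by omega)

private lemma v2_even (q : ℕ) (h : q ≠ 0) : (2*q).factorization 2 = q.factorization 2 + 1 := by
  rw [Nat.factorization_mul (by norm_num) h]
  simp [Nat.Prime.factorization_self Nat.prime_two, add_comm]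

private lemma sdig_ne (m : ℕ) : (sdig m ≠ sdig (m+1)) ↔ Even ((m+1).factorization 2) := by
  induction m using Nat.strong_induction_on with
  | _ m ih =>
    rcases Nat.even_or_odd m with ⟨q, hq⟩ | ⟨q, hq⟩
    · subst hq
      rw [show q + q = 2*q by ring, sdig_two_mul, sdig_two_mul_add_one, v2_odd]
      have := sdig_lt q
      constructor
      · intro _; exact Even.zero
      · intro _; omega
    · subst hq
      rw [show 2*q+1+1 = 2*(q+1) by ring, sdig_two_mul_add_one, sdig_two_mul,
        v2_even (q+1) (by omega)]
      have h1 := sdig_lt q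
      have h2 := sdig_lt (q+1)
      have ihq := ih q (by omega)
      rw [Nat.even_add_one]
      constructor
      · intro h
        rw [← ihq] at *
        omega
      · intro h
        rw [← ihq] at h
        omega

private lemma tm_ne (m : ℕ) (hm : 1 ≤ m) :
    (thueMorse m ≠ thueMorse (m+1)) ↔ Even (m.factorization 2) := by
  obtain ⟨p, rfl⟩ : ∃ p, m = p + 1 := ⟨m - 1, by omega⟩
  have h1 : thueMorse (p+1) = decide (sdig p = 1) := by simp [thueMorse, sdig]; rfl
  have h2 : thueMorse (p+1+1) = decide (sdig (p+1) = 1) := by simp [thueMorse, sdig]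
  rw [h1, h2, ← sdig_ne p]
  have := sdig_lt p; have := sdig_lt (p+1)
  constructor
  · intro h hc; rw [hc] at h; exact h rfl
  · intro h hc
    simp only [decide_eq_decide] at hc
    omega

/-- number of integers in `[a, b)` with even 2-adic valuation -/
private def Cnt (a b : ℕ) : ℕ :=
  ((Finset.Ico a b).filter (fun m => Even (m.factorization 2))).card

private lemma odd_count (a b : ℕ) (ha : 1 ≤ a) :
    ((Finset.Ico a b).filter (fun m => ¬ Even (m.factorization 2))).card
      = Cnt ((a+1)/2) ((b+1)/2) := by
  unfold Cnt
  apply Finset.card_nbij' (fun m => m / 2) (fun q => 2 * q)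
  · intro m hm
    simp only [Finset.mem_coe, Finset.mem_filter, Finset.mem_Ico] at hm ⊢
    obtain ⟨⟨h1, h2⟩, h3⟩ := hm
    have hdvd : 2 ∣ m := by
      by_contra hnd
      exact h3 (by rw [Nat.factorization_eq_zero_of_not_dvd hnd]; exact Even.zero)
    obtain ⟨q, rfl⟩ := hdvd
    have hq : q ≠ 0 := by omega
    rw [v2_even q hq] at h3
    rw [Nat.even_add_one] at h3
    refine ⟨⟨by omega, by omega⟩, ?_⟩
    rw [Nat.mul_div_cancel_left q (by norm_num)]
    exact not_not.mp h3
  · intro q hq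
    simp only [Finset.mem_coe, Finset.mem_filter, Finset.mem_Ico] at hq ⊢
    obtain ⟨⟨h1, h2⟩, h3⟩ := hq
    have hqpos : q ≠ 0 := by omega
    rw [v2_even q hqpos, Nat.even_add_one]
    exact ⟨⟨by omega, by omega⟩, by simpa using h3⟩
  · intro m hm
    simp only [Finset.mem_coe, Finset.mem_filter, Finset.mem_Ico] at hm
    obtain ⟨⟨h1, h2⟩, h3⟩ := hm
    have hdvd : 2 ∣ m := by
      by_contra hnd
      exact h3 (by rw [Nat.factorization_eq_zero_of_not_dvd hnd]; exact Even.zero)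
    dsimp only; omega
  · intro q _
    dsimp only; omega

private lemma Cnt_rec (a b : ℕ) (ha : 1 ≤ a) :
    Cnt a b + Cnt ((a+1)/2) ((b+1)/2) = b - a := by
  rw [← odd_count a b ha]
  unfold Cnt
  rw [Finset.card_filter_add_card_filter_not (s := Finset.Ico a b)
    (p := fun m => Even (m.factorization 2))]
  exact Nat.card_Ico a b

private lemma Cnt_mono (a b b' : ℕ) (h : b ≤ b') : Cnt a b ≤ Cnt a b' := by
  apply Finset.card_le_card
  apply Finset.filter_subset_filter
  exact Finset.Ico_subset_Ico le_rfl h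

private lemma zip_lemma (k : ℕ) : ∀ (g : ℕ → Bool),
    List.zipWith (fun a b => a != b) (List.map g (List.range (k+1)))
      ((List.map g (List.range (k+1))).tail)
    = List.map (fun j => g j != g (j+1)) (List.range k) := by
  induction k with
  | zero => intro g; simp [List.range_succ_eq_map]
  | succ k ih =>
    intro g
    have h := ih (fun j => g (j+1))
    simp only [List.range_succ_eq_map, List.map_cons, List.map_map, List.tail_cons,
      List.zipWith_cons_cons, Function.comp_def, Nat.succ_eq_add_one] at h ⊢
    rw [h]

private lemma countP_range (p : ℕ → Bool) (k : ℕ) :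
    (List.range k).countP p = ((Finset.range k).filter (fun j => p j = true)).card := by
  induction k with
  | zero => simp
  | succ k ih =>
    rw [List.range_succ, List.countP_append, Finset.range_add_one, Finset.filter_insert]
    have hk : k ∉ Finset.filter (fun j => p j = true) (Finset.range k) := by simp
    cases hp : p k <;> simp [hp, ih, Finset.card_insert_of_notMem hk]

private lemma alt_factor_s8 (g : ℕ → Bool) (k : ℕ) :
    alt (List.map g (List.range (k+1)))
      = ((Finset.range k).filter (fun j => g j ≠ g (j+1))).card := by
  unfold alt
  rw [zip_lemma, List.count, List.countP_map]
  rw [countP_range]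
  congr 1
  ext j
  simp

private lemma alt_eq (i k : ℕ) (hi : 1 ≤ i) :
    alt (factorAt thueMorse i (k+1)) = Cnt i (i+k) := by
  have h0 : factorAt thueMorse i (k+1)
      = List.map (fun j => thueMorse (i+j)) (List.range (k+1)) := rfl
  rw [h0, alt_factor_s8]
  have hcong : Finset.filter (fun j => thueMorse (i+j) ≠ thueMorse (i+(j+1))) (Finset.range k)
      = Finset.filter (fun j => Even ((i+j).factorization 2)) (Finset.range k) := by
    apply Finset.filter_congr
    intro j _
    simpa [Nat.add_assoc] using tm_ne (i+j) (by omega)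
  rw [hcong]
  unfold Cnt
  apply Finset.card_nbij' (fun j => i + j) (fun m => m - i)
  · intro j hj
    simp only [Finset.mem_coe, Finset.mem_filter, Finset.mem_range, Finset.mem_Ico] at hj ⊢
    exact ⟨⟨by omega, by omega⟩, hj.2⟩
  · intro m hm
    simp only [Finset.mem_coe, Finset.mem_filter, Finset.mem_range, Finset.mem_Ico] at hm ⊢
    refine ⟨by omega, ?_⟩
    rw [show i + (m - i) = m by omega]
    exact hm.2
  · intro j _; dsimp only; omega
  · intro m hm
    simp only [Finset.mem_coe, Finset.mem_filter, Finset.mem_Ico] at hm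
    dsimp only; omega

theorem stmt8 (n : ℕ) (hn : 1 ≤ n) :
    tmAltMin (4 * n + 2) = 2 * n + tmAltMin (n + 1) := by
  have hS : { a : ℕ | ∃ i ≥ 1, a = alt (factorAt thueMorse i (4 * n + 2)) }
      = { a : ℕ | ∃ i ≥ 1, a = Cnt i (i + (4 * n + 1)) } := by
    ext a
    simp only [Set.mem_setOf_eq]
    constructor
    · rintro ⟨i, hi, rfl⟩
      exact ⟨i, hi, by rw [show 4 * n + 2 = (4 * n + 1) + 1 by ring, alt_eq i (4*n+1) hi]⟩
    · rintro ⟨i, hi, rfl⟩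
      exact ⟨i, hi, by rw [show 4 * n + 2 = (4 * n + 1) + 1 by ring, alt_eq i (4*n+1) hi]⟩
  have hSn : { a : ℕ | ∃ i ≥ 1, a = alt (factorAt thueMorse i (n + 1)) }
      = { a : ℕ | ∃ i ≥ 1, a = Cnt i (i + n) } := by
    ext a
    simp only [Set.mem_setOf_eq]
    constructor
    · rintro ⟨i, hi, rfl⟩
      exact ⟨i, hi, (alt_eq i n hi)⟩
    · rintro ⟨i, hi, rfl⟩
      exact ⟨i, hi, (alt_eq i n hi).symm⟩
  rw [tmAltMin, tmAltMin, hS, hSn]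
  set Sn := { a : ℕ | ∃ i ≥ 1, a = Cnt i (i + n) } with hSndef
  set S := { a : ℕ | ∃ i ≥ 1, a = Cnt i (i + (4 * n + 1)) } with hSdef
  have hSnne : Sn.Nonempty := ⟨Cnt 1 (1 + n), 1, le_rfl, rfl⟩
  have hSne : S.Nonempty := ⟨Cnt 1 (1 + (4 * n + 1)), 1, le_rfl, rfl⟩
  obtain ⟨c, hc1, hceq⟩ : ∃ i ≥ 1, sInf Sn = Cnt i (i + n) := Nat.sInf_mem hSnne
  -- upper bound
  have hub : sInf S ≤ 2 * n + sInf Sn := by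
    apply Nat.sInf_le
    refine ⟨4 * c - 2, by omega, ?_⟩
    have e1 := Cnt_rec (4 * c - 2) ((4 * c - 2) + (4 * n + 1)) (by omega)
    have e2 := Cnt_rec (2 * c - 1) (2 * c + 2 * n) (by omega)
    rw [show (4 * c - 2 + 1) / 2 = 2 * c - 1 by omega,
      show ((4 * c - 2) + (4 * n + 1) + 1) / 2 = 2 * c + 2 * n by omega] at e1
    rw [show (2 * c - 1 + 1) / 2 = c by omega,
      show (2 * c + 2 * n + 1) / 2 = c + n by omega] at e2
    rw [hceq]
    omega
  -- lower bound
  have hlb : 2 * n + sInf Sn ≤ sInf S := by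
    obtain ⟨i, hi1, hieq⟩ : ∃ j ≥ 1, sInf S = Cnt j (j + (4 * n + 1)) := Nat.sInf_mem hSne
    have e1 := Cnt_rec i (i + (4 * n + 1)) hi1
    have e2 := Cnt_rec ((i + 1) / 2) ((i + (4 * n + 1) + 1) / 2) (by omega)
    have hmono : Cnt (((i + 1) / 2 + 1) / 2) ((((i + 1) / 2 + 1) / 2) + n)
        ≤ Cnt (((i + 1) / 2 + 1) / 2) (((i + (4 * n + 1) + 1) / 2 + 1) / 2) :=
      Cnt_mono _ _ _ (by omega)
    have hmem : Cnt (((i + 1) / 2 + 1) / 2) ((((i + 1) / 2 + 1) / 2) + n) ∈ Sn :=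
      ⟨((i + 1) / 2 + 1) / 2, by omega, rfl⟩
    have hsle := Nat.sInf_le hmem
    rw [hieq]
    omega
  omega
end

section
/- For every integer n ≥ 1, M_{4n+2} = 2n + 1 + M_{n+1}, where m_k (resp. M_k) is the minimum (resp. maximum) number of alternations among length-k factors of the Thue–Morse sequence. -/
lemma ds_even (m : ℕ) : (Nat.digits 2 (2*m)).sum % 2 = (Nat.digits 2 m).sum % 2 := by
  rcases Nat.eq_zero_or_pos m with h | h
  · subst h; rfl
  · rw [Nat.digits_def' (by norm_num : 1 < 2) (by omega)]
    have h1 : 2*m % 2 = 0 := by omega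
    have h2 : 2*m / 2 = m := by omega
    rw [h1, h2]
    simp

lemma ds_odd (m : ℕ) : (Nat.digits 2 (2*m+1)).sum % 2 = ((Nat.digits 2 m).sum + 1) % 2 := by
  rw [Nat.digits_def' (by norm_num : 1 < 2) (by omega)]
  simp only [List.sum_cons]
  have h1 : (2*m+1) % 2 = 1 := by omega
  have h2 : (2*m+1) / 2 = m := by omega
  rw [h1, h2]
  omega

lemma tm_odd_s9 (j : ℕ) (hj : 1 ≤ j) : thueMorse (2*j - 1) = thueMorse j := by
  unfold thueMorse
  have h : 2*j - 1 - 1 = 2*(j-1) := by omega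
  rw [h, ds_even]

lemma tm_even_s9 (j : ℕ) (hj : 1 ≤ j) : thueMorse (2*j) = !thueMorse j := by
  unfold thueMorse
  have h : 2*j - 1 = 2*(j-1) + 1 := by omega
  rw [h, ds_odd]
  rcases Nat.mod_two_eq_zero_or_one (Nat.digits 2 (j-1)).sum with h2 | h2 <;>
    simp [h2, Nat.add_mod, decide_eq_true_eq]

lemma fac_succ {α : Type*} (x : ℕ → α) (i k : ℕ) :
    factorAt x i (k+1) = factorAt x i k ++ [x (i+k)] := by
  simp [factorAt, List.range_succ]

lemma fac_cons {α : Type*} (x : ℕ → α) (i k : ℕ) :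
    factorAt x i (k+1) = x i :: factorAt x (i+1) k := by
  simp [factorAt, List.range_succ_eq_map, List.map_map, Function.comp]
  intro a _
  ring_nf

def nedd (a b : Bool) : ℕ := if a = b then 0 else 1

lemma mu_cons (b : Bool) (v : List Bool) : mu (b :: v) = b :: (!b) :: mu v := by
  cases b <;> simp [mu]

lemma alt_cons₂ (a b : Bool) (l : List Bool) :
    alt (a :: b :: l) = nedd a b + alt (b :: l) := by
  cases a <;> cases b <;> simp [alt, nedd, List.count_cons] <;> omega

lemma nedd_sum (a b : Bool) : nedd a b + nedd (!a) b = 1 := by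
  cases a <;> cases b <;> simp [nedd]

lemma nedd_not_self (b : Bool) : nedd b (!b) = 1 := by cases b <;> simp [nedd]

lemma lemA (v : List Bool) : ∀ b, alt (mu (b :: v)) + alt (b :: v) + 1 = 2 * (v.length + 1) := by
  induction v with
  | nil => intro b; cases b <;> simp [mu, alt]
  | cons c v ih =>
    intro b
    rw [mu_cons, alt_cons₂, mu_cons c v, alt_cons₂ (!b) c, ← mu_cons c v, alt_cons₂ b c]
    have h1 := ih c
    have h2 := nedd_sum b c
    have h3 := nedd_not_self b
    simp only [List.length_cons] at *
    omega

lemma lemB (v : List Bool) : ∀ b c, alt (mu (b :: v) ++ [c]) + alt ((b :: v) ++ [c]) = 2 * (v.length + 1) := by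
  induction v with
  | nil =>
    intro b c
    rw [mu_cons]
    simp only [mu, List.flatMap_nil, List.nil_append, List.cons_append, List.append_nil]
    rw [alt_cons₂, alt_cons₂, alt_cons₂]
    have h1 := nedd_sum (!b) c
    have h2 := nedd_not_self b
    simp only [Bool.not_not] at h1
    simp only [alt_single, List.length_nil]
    omega
  | cons d v ih =>
    intro b c
    rw [mu_cons]
    simp only [List.cons_append]
    rw [alt_cons₂, mu_cons d v]
    simp only [List.cons_append]
    rw [alt_cons₂ (!b) d]
    rw [show ((d : Bool) :: (!d) :: (mu v ++ [c])) = (d :: (!d) :: mu v) ++ [c] by simp,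
        ← mu_cons d v, alt_cons₂ b d]
    have h1 := ih d c
    rw [mu_cons d v] at h1
    simp only [List.cons_append] at h1
    rw [show ((d : Bool) :: (!d) :: (mu v ++ [c])) = (d :: (!d) :: mu v) ++ [c] by simp,
        ← mu_cons d v] at h1
    have h2 := nedd_sum b d
    have h3 := nedd_not_self b
    simp only [List.length_cons] at *
    omega

lemma lemC (v : List Bool) : ∀ a d, alt ((!a) :: (mu v ++ [d])) + alt (a :: (v ++ [d])) = 2 * v.length + 1 := by
  intro a d
  cases v with
  | nil =>
    simp only [mu, List.flatMap_nil, List.nil_append, List.length_nil]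
    rw [alt_cons₂, alt_cons₂]
    have h1 := nedd_sum a d
    simp only [alt_single]
    omega
  | cons b v =>
    rw [mu_cons]
    simp only [List.cons_append]
    rw [alt_cons₂ (!a) b, alt_cons₂ a b]
    have h1 := lemB v b d
    rw [mu_cons] at h1
    simp only [List.cons_append, List.length_cons] at h1 ⊢
    have h2 := nedd_sum a b
    omega

lemma lemD (v : List Bool) (a b : Bool) :
    alt ((!a) :: mu (b :: v)) + alt (a :: b :: v) = 2 * (v.length + 1) := by
  rw [mu_cons, alt_cons₂ (!a) b, ← mu_cons, alt_cons₂ a b]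
  have h1 := lemA v b
  have h2 := nedd_sum a b
  omega

lemma alt_le_append (l : List Bool) (c : Bool) : alt l ≤ alt (l ++ [c]) := by
  induction l with
  | nil => simp [alt_nil]
  | cons a l ih =>
    cases l with
    | nil => simp [alt_single, alt_nil]
    | cons b l =>
      simp only [List.cons_append] at *
      rw [alt_cons₂, alt_cons₂ a b]
      omega

lemma alt_le_length (l : List Bool) : alt l ≤ l.length := by
  unfold alt
  calc (List.zipWith (fun a b => a != b) l l.tail).count true
      ≤ (List.zipWith (fun a b => a != b) l l.tail).length := List.count_le_length
    _ ≤ l.length := by rw [List.length_zipWith]; omega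

lemma mu_append (u v : List Bool) : mu (u ++ v) = mu u ++ mu v := by simp [mu]
lemma mu_singleton (c : Bool) : mu [c] = [c, !c] := by cases c <;> simp [mu]
lemma fac_length {α : Type*} (x : ℕ → α) (i k : ℕ) : (factorAt x i k).length = k := by
  simp [factorAt]
lemma fac_zero {α : Type*} (x : ℕ → α) (i : ℕ) : factorAt x i 0 = [] := rfl

lemma mu_fac (L : ℕ) : ∀ j, 1 ≤ j →
    factorAt thueMorse (2*j - 1) (2*L) = mu (factorAt thueMorse j L) := by
  induction L with
  | zero => intro j hj; simp [fac_zero, mu]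
  | succ L ih =>
    intro j hj
    have e1 : 2*(L+1) = (2*L+1)+1 := by omega
    rw [e1, fac_succ, fac_succ, fac_succ, mu_append, mu_singleton, ih j hj]
    have e2 : 2*j-1 + (2*L) = 2*(j+L) - 1 := by omega
    have e3 : 2*j-1 + (2*L+1) = 2*(j+L) := by omega
    rw [e2, e3, tm_odd_s9 (j+L) (by omega), tm_even_s9 (j+L) (by omega)]
    simp


def altSet (k : ℕ) : Set ℕ := { a : ℕ | ∃ i ≥ 1, a = alt (factorAt thueMorse i k) }

lemma altSet_bdd (k : ℕ) : BddAbove (altSet k) := by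
  refine ⟨k, fun a ha => ?_⟩
  obtain ⟨i, _, rfl⟩ := ha
  calc alt (factorAt thueMorse i k) ≤ (factorAt thueMorse i k).length := alt_le_length _
    _ = k := fac_length _ _ _

lemma altSet_ne (k : ℕ) : (altSet k).Nonempty := ⟨_, 1, le_refl 1, rfl⟩

lemma lemO (n : ℕ) (hn : 1 ≤ n) (j : ℕ) (hj : 1 ≤ j) :
    ∃ j' ≥ 1, alt (factorAt thueMorse j (2*n+1)) + alt (factorAt thueMorse j' (n+1)) = 2*n := by
  obtain ⟨m, rfl⟩ : ∃ m, n = m + 1 := ⟨n-1, by omega⟩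
  rcases Nat.even_or_odd j with ⟨k, hk⟩ | ⟨k, hk⟩
  · -- j = 2k, k ≥ 1
    refine ⟨k, by omega, ?_⟩
    have hk1 : 1 ≤ k := by omega
    have h1 : factorAt thueMorse j (2*(m+1)+1) =
        (!thueMorse k) :: mu (factorAt thueMorse (k+1) (m+1)) := by
      have e1 : 2*(m+1)+1 = (2*(m+1))+1 := by omega
      rw [e1, fac_cons]
      have e2 : j = 2*k := by omega
      have e3 : j + 1 = 2*(k+1) - 1 := by omega
      rw [e2, tm_even_s9 k hk1, ← e2, e3, mu_fac (m+1) (k+1) (by omega)]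
    have h2 : factorAt thueMorse k ((m+1)+1) = thueMorse k :: factorAt thueMorse (k+1) (m+1) :=
      fac_cons _ _ _
    have h3 : factorAt thueMorse (k+1) (m+1) =
        thueMorse (k+1) :: factorAt thueMorse (k+2) m := fac_cons _ _ _
    rw [h1, h2, h3]
    have := lemD (factorAt thueMorse (k+2) m) (thueMorse k) (thueMorse (k+1))
    rw [fac_length] at this
    omega
  · -- j = 2k+1
    refine ⟨k+1, by omega, ?_⟩
    have h1 : factorAt thueMorse j (2*(m+1)+1) =
        mu (factorAt thueMorse (k+1) (m+1)) ++ [thueMorse (k+m+2)] := by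
      rw [fac_succ]
      have e1 : j = 2*(k+1) - 1 := by omega
      have e2 : j + 2*(m+1) = 2*(k+m+2) - 1 := by omega
      rw [e2, tm_odd_s9 (k+m+2) (by omega), e1, mu_fac (m+1) (k+1) (by omega)]
    have h2 : factorAt thueMorse (k+1) ((m+1)+1) =
        factorAt thueMorse (k+1) (m+1) ++ [thueMorse (k+m+2)] := by
      rw [fac_succ]
      have : k+1 + (m+1) = k+m+2 := by omega
      rw [this]
    have h3 : factorAt thueMorse (k+1) (m+1) =
        thueMorse (k+1) :: factorAt thueMorse (k+2) m := fac_cons _ _ _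
    rw [h1, h2, h3]
    have := lemB (factorAt thueMorse (k+2) m) (thueMorse (k+1)) (thueMorse (k+m+2))
    rw [fac_length] at this
    omega

theorem stmt9 (n : ℕ) (hn : 1 ≤ n) :
    tmAltMax (4 * n + 2) = 2 * n + 1 + tmAltMax (n + 1) := by
  have hS : ∀ k, { a : ℕ | ∃ i ≥ 1, a = alt (factorAt thueMorse i k) } = altSet k :=
    fun k => rfl
  have key_le : ∀ a ∈ altSet (4*n+2), a ≤ 2*n+1 + tmAltMax (n+1) := by
    rintro a ⟨i, hi, rfl⟩
    rcases Nat.even_or_odd i with ⟨k, hk⟩ | ⟨k, hk⟩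
    · -- i = 2k even
      have hk1 : 1 ≤ k := by omega
      have h1 : factorAt thueMorse i (4*n+2) =
          (!thueMorse k) :: (mu (factorAt thueMorse (k+1) (2*n)) ++ [thueMorse (k+2*n+1)]) := by
        rw [show (4*n+2 : ℕ) = (4*n+1)+1 from rfl, fac_cons,
            show (4*n+1 : ℕ) = (4*n)+1 from rfl, fac_succ]
        have e1 : i = 2*k := by omega
        have e2 : i + 1 = 2*(k+1) - 1 := by omega
        have e3 : i + 1 + 4*n = 2*(k+2*n+1) - 1 := by omega
        rw [e3, tm_odd_s9 (k+2*n+1) (by omega), e2,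
            show (4*n : ℕ) = 2*(2*n) by ring, mu_fac (2*n) (k+1) (by omega),
            e1, tm_even_s9 k hk1]
      have h2 : factorAt thueMorse k (2*n+2) =
          thueMorse k :: (factorAt thueMorse (k+1) (2*n) ++ [thueMorse (k+2*n+1)]) := by
        rw [show (2*n+2 : ℕ) = (2*n+1)+1 from rfl, fac_cons,
            show (2*n+1 : ℕ) = (2*n)+1 from rfl, fac_succ]
        have : k+1 + 2*n = k+2*n+1 := by omega
        rw [this]
      have hC := lemC (factorAt thueMorse (k+1) (2*n)) (thueMorse k) (thueMorse (k+2*n+1))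
      rw [fac_length] at hC
      rw [← h2] at hC
      rw [h1]
      -- hC : alt (fac i (4n+2)) + alt (fac k (2n+2)) = 4n+1  (after rw h1 in goal form)
      have hpre : alt (factorAt thueMorse k (2*n+1)) ≤ alt (factorAt thueMorse k (2*n+2)) := by
        have h := alt_le_append (factorAt thueMorse k (2*n+1)) (thueMorse (k + (2*n+1)))
        rw [← fac_succ] at h
        have e : 2*n+1+1 = 2*n+2 := by omega
        rw [e] at h
        exact h
      obtain ⟨j', hj', hO⟩ := lemO n hn k hk1
      have hZ : alt (factorAt thueMorse j' (n+1)) ≤ tmAltMax (n+1) :=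
        le_csSup (by rw [hS]; exact altSet_bdd _) ⟨j', hj', rfl⟩
      omega
    · -- i = 2k+1 odd
      have h1 : factorAt thueMorse i (4*n+2) = mu (factorAt thueMorse (k+1) (2*n+1)) := by
        have e1 : i = 2*(k+1) - 1 := by omega
        rw [e1, show (4*n+2 : ℕ) = 2*(2*n+1) by omega, mu_fac (2*n+1) (k+1) (by omega)]
      have h2 : factorAt thueMorse (k+1) (2*n+1) =
          thueMorse (k+1) :: factorAt thueMorse (k+2) (2*n) := by
        rw [show (2*n+1 : ℕ) = (2*n)+1 from rfl, fac_cons]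
      have hA := lemA (factorAt thueMorse (k+2) (2*n)) (thueMorse (k+1))
      rw [fac_length, ← h2] at hA
      rw [h1]
      obtain ⟨j', hj', hO⟩ := lemO n hn (k+1) (by omega)
      have hZ : alt (factorAt thueMorse j' (n+1)) ≤ tmAltMax (n+1) :=
        le_csSup (by rw [hS]; exact altSet_bdd _) ⟨j', hj', rfl⟩
      omega
  have key_ge : 2*n+1 + tmAltMax (n+1) ∈ altSet (4*n+2) := by
    have hmem : tmAltMax (n+1) ∈ altSet (n+1) := by
      have := Nat.sSup_mem (s := altSet (n+1)) (altSet_ne _) (altSet_bdd _)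
      exact this
    obtain ⟨j, hj, hM⟩ := hmem
    obtain ⟨m, rfl⟩ : ∃ m, n = m + 1 := ⟨n-1, by omega⟩
    set k := 2*j - 1 with hkdef
    have hk1 : 1 ≤ k := by omega
    have h1 : factorAt thueMorse (2*k-1) (4*(m+1)+2) = mu (factorAt thueMorse k (2*(m+1)+1)) := by
      rw [show (4*(m+1)+2 : ℕ) = 2*(2*(m+1)+1) by omega]
      exact mu_fac (2*(m+1)+1) k hk1
    have h2 : factorAt thueMorse k (2*(m+1)+1) =
        mu (factorAt thueMorse j (m+1)) ++ [thueMorse (j+m+1)] := by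
      rw [show (2*(m+1)+1 : ℕ) = (2*(m+1))+1 from rfl, fac_succ]
      have e2 : k + 2*(m+1) = 2*(j+m+1) - 1 := by omega
      have e1 : k = 2*j - 1 := hkdef
      rw [e2, tm_odd_s9 (j+m+1) (by omega), e1, mu_fac (m+1) j hj]
    have h3 : factorAt thueMorse j ((m+1)+1) =
        factorAt thueMorse j (m+1) ++ [thueMorse (j+m+1)] := by
      rw [fac_succ]
      have : j + (m+1) = j+m+1 := by omega
      rw [this]
    have h4 : factorAt thueMorse j (m+1) = thueMorse j :: factorAt thueMorse (j+1) m :=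
      fac_cons _ _ _
    have hB := lemB (factorAt thueMorse (j+1) m) (thueMorse j) (thueMorse (j+m+1))
    rw [fac_length, ← h4] at hB
    rw [← h2, ← h3] at hB
    have h5 : factorAt thueMorse k (2*(m+1)+1) =
        thueMorse k :: factorAt thueMorse (k+1) (2*(m+1)) := by
      rw [show (2*(m+1)+1 : ℕ) = (2*(m+1))+1 from rfl, fac_cons]
    have hA := lemA (factorAt thueMorse (k+1) (2*(m+1))) (thueMorse k)
    rw [fac_length, ← h5] at hA
    refine ⟨2*k-1, by omega, ?_⟩
    rw [h1]
    omega
  have hBdd : BddAbove (altSet (4*n+2)) := altSet_bdd _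
  have hNe : (altSet (4*n+2)).Nonempty := altSet_ne _
  apply le_antisymm
  · exact csSup_le hNe key_le
  · exact le_csSup hBdd key_ge
end
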